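/- Under the same hypotheses (finitely supported X with mean 0, variance 1, minimum outcome probability λ ≤ 1/2; f multilinear of degree at most d with ‖f‖_2 = 1), setting t_0 = (2e/λ)^d one has E[f(X^{⊗n})²·1{|f(X^{⊗n})| > t_0}] ≤ 0.52. -/

import Mathlib

open MeasureTheory

/-- Evaluation of a multilinear polynomial given by its coefficients on subsets of `Fin n`. -/
noncomputable def mlEval {n : ℕ} (coeff : Finset (Fin n) → ℝ) (x : Fin n → ℝ) : ℝ :=
  ∑ S : Finset (Fin n), coeff S * ∏ i ∈ S, x i

set_option maxHeartbeats 1000000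


lemma mem_map_castSuccEmb {n : ℕ} (T : Finset (Fin n)) (j : Fin (n + 1)) :
    j ∈ T.map Fin.castSuccEmb ↔ ∃ a ∈ T, Fin.castSucc a = j := by
  simp [Fin.castSuccEmb]
  rfl

lemma last_not_mem_map {n : ℕ} (T : Finset (Fin n)) :
    Fin.last n ∉ T.map Fin.castSuccEmb := by
  rw [mem_map_castSuccEmb]
  rintro ⟨a, -, ha⟩
  exact (Fin.castSucc_lt_last a).ne ha

lemma preimage_congr' {n : ℕ} {S S' : Finset (Fin (n + 1))} (h : S = S') :
    S.preimage Fin.castSucc (Fin.castSucc_injective n).injOn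
      = S'.preimage Fin.castSucc (Fin.castSucc_injective n).injOn := by
  subst h; rfl

lemma preimage_map_castSuccEmb {n : ℕ} (T : Finset (Fin n)) :
    (T.map Fin.castSuccEmb).preimage Fin.castSucc (Fin.castSucc_injective n).injOn = T := by
  ext j
  rw [Finset.mem_preimage, mem_map_castSuccEmb]
  constructor
  · rintro ⟨a, ha, h⟩
    rwa [(Fin.castSucc_injective n) h] at ha
  · exact fun hj => ⟨j, hj, rfl⟩

noncomputable def finsetSnocEquiv (n : ℕ) : Finset (Fin n) × Bool ≃ Finset (Fin (n + 1)) where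
  toFun p := if p.2 then insert (Fin.last n) (p.1.map Fin.castSuccEmb) else p.1.map Fin.castSuccEmb
  invFun S := ⟨(S.erase (Fin.last n)).preimage Fin.castSucc (Fin.castSucc_injective n).injOn,
    Fin.last n ∈ S⟩
  left_inv p := by
    obtain ⟨T, b⟩ := p
    cases b
    · refine Prod.ext ?_ ?_
      · simp only [if_false, Bool.false_eq_true]
        rw [preimage_congr' (Finset.erase_eq_of_notMem (last_not_mem_map T)),
          preimage_map_castSuccEmb]
      · simp only [if_false, Bool.false_eq_true, decide_eq_false_iff_not]
        exact last_not_mem_map T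
    · refine Prod.ext ?_ ?_
      · simp only [if_true]
        rw [preimage_congr' (Finset.erase_insert (last_not_mem_map T)), preimage_map_castSuccEmb]
      · simp
  right_inv S := by
    by_cases hl : Fin.last n ∈ S
    · simp only [hl, decide_true, if_true]
      ext j
      refine Fin.lastCases ?_ (fun i => ?_) j
      · simpa using hl
      · simp only [Finset.mem_insert, mem_map_castSuccEmb, Finset.mem_preimage, Finset.mem_erase]
        constructor
        · rintro (h | ⟨a, ⟨-, ha⟩, h⟩)
          · exact absurd h (Fin.castSucc_lt_last i).ne
          · rwa [← (Fin.castSucc_injective n) h]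
        · intro hj
          exact Or.inr ⟨i, ⟨(Fin.castSucc_lt_last i).ne, hj⟩, rfl⟩
    · simp only [hl, decide_false, Bool.false_eq_true, if_false]
      ext j
      refine Fin.lastCases ?_ (fun i => ?_) j
      · simp only [mem_map_castSuccEmb, Finset.mem_preimage]
        constructor
        · rintro ⟨a, -, h⟩
          exact absurd h (Fin.castSucc_lt_last a).ne
        · exact fun h => absurd h hl
      · simp only [mem_map_castSuccEmb, Finset.mem_preimage, Finset.mem_erase]
        constructor
        · rintro ⟨a, ⟨-, ha⟩, h⟩
          rwa [← (Fin.castSucc_injective n) h]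
        · intro hj
          exact ⟨i, ⟨(Fin.castSucc_lt_last i).ne, hj⟩, rfl⟩

lemma finsetSnocEquiv_true {n : ℕ} (T : Finset (Fin n)) :
    finsetSnocEquiv n (T, true) = insert (Fin.last n) (T.map Fin.castSuccEmb) := rfl

lemma finsetSnocEquiv_false {n : ℕ} (T : Finset (Fin n)) :
    finsetSnocEquiv n (T, false) = T.map Fin.castSuccEmb := rfl

lemma mlEval_snoc {n : ℕ} (coeff : Finset (Fin (n + 1)) → ℝ) (x : Fin n → ℝ) (t : ℝ) :
    mlEval coeff (Fin.snoc x t) =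
      mlEval (fun T => coeff (T.map Fin.castSuccEmb)) x
        + t * mlEval (fun T => coeff (insert (Fin.last n) (T.map Fin.castSuccEmb))) x := by
  unfold mlEval
  rw [← Equiv.sum_comp (finsetSnocEquiv n)
    (fun S => coeff S * ∏ i ∈ S, Fin.snoc x t i), Fintype.sum_prod_type]
  have key : ∀ T : Finset (Fin n),
      ∑ b : Bool, (coeff (finsetSnocEquiv n (T, b)) * ∏ i ∈ finsetSnocEquiv n (T, b), Fin.snoc x t i)
        = coeff (T.map Fin.castSuccEmb) * ∏ i ∈ T, x i
          + t * (coeff (insert (Fin.last n) (T.map Fin.castSuccEmb)) * ∏ i ∈ T, x i) := by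
    intro T
    have hprod : ∏ i ∈ T.map Fin.castSuccEmb, Fin.snoc x t i = ∏ i ∈ T, x i := by
      rw [Finset.prod_map]
      refine Finset.prod_congr rfl fun i _ => ?_
      rw [show ((Fin.castSuccEmb : Fin n ↪ Fin (n+1)) i) = Fin.castSucc i from rfl]
      exact Fin.snoc_castSucc (α := fun _ => ℝ) t x i
    rw [Fintype.sum_bool, finsetSnocEquiv_true, finsetSnocEquiv_false,
      Finset.prod_insert (last_not_mem_map T), hprod, Fin.snoc_last]
    ring
  rw [Finset.sum_congr rfl fun T _ => key T, Finset.sum_add_distrib, ← Finset.mul_sum]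


lemma measurable_mlEval {n : ℕ} (coeff : Finset (Fin n) → ℝ) : Measurable (mlEval coeff) := by
  unfold mlEval
  exact Finset.measurable_sum _ fun S _ =>
    (Finset.measurable_prod _ fun i _ => measurable_pi_apply i).const_mul _

section
variable {μ : Measure ℝ} [IsProbabilityMeasure μ]

lemma ae_pi_bound {M : ℝ} (hμM : ∀ᵐ t ∂μ, |t| ≤ M) (n : ℕ) :
    ∀ᵐ x ∂(Measure.pi fun _ : Fin n => μ), ∀ i, |x i| ≤ M := by
  rw [ae_all_iff]
  intro i
  rw [ae_iff]
  have : {x : Fin n → ℝ | ¬ |x i| ≤ M} = Function.eval i ⁻¹' {t : ℝ | ¬ |t| ≤ M} := rfl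
  rw [this]
  exact Measure.pi_eval_preimage_null _ (by rw [← ae_iff]; exact hμM)

lemma mlEval_bound {n : ℕ} (coeff : Finset (Fin n) → ℝ) {M : ℝ} {x : Fin n → ℝ}
    (hM : 1 ≤ M) (hx : ∀ i, |x i| ≤ M) :
    |mlEval coeff x| ≤ (∑ S : Finset (Fin n), |coeff S|) * M ^ n := by
  unfold mlEval
  calc |∑ S : Finset (Fin n), coeff S * ∏ i ∈ S, x i|
      ≤ ∑ S : Finset (Fin n), |coeff S * ∏ i ∈ S, x i| := Finset.abs_sum_le_sum_abs _ _
    _ ≤ ∑ S : Finset (Fin n), |coeff S| * M ^ n := by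
        refine Finset.sum_le_sum fun S _ => ?_
        rw [abs_mul]
        refine mul_le_mul_of_nonneg_left ?_ (abs_nonneg _)
        calc |∏ i ∈ S, x i| = ∏ i ∈ S, |x i| := by rw [Finset.abs_prod]
          _ ≤ ∏ i ∈ S, M := Finset.prod_le_prod (fun i _ => abs_nonneg _) (fun i _ => hx i)
          _ = M ^ S.card := by rw [Finset.prod_const]
          _ ≤ M ^ n := pow_le_pow_right₀ hM (by simpa using S.card_le_univ)
    _ = (∑ S : Finset (Fin n), |coeff S|) * M ^ n := by rw [Finset.sum_mul]

lemma integrable_of_ae_bound {α : Type*} [MeasurableSpace α] {ν : Measure α}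
    [IsProbabilityMeasure ν] {F : α → ℝ} (hF : Measurable F) {C : ℝ}
    (hC : ∀ᵐ x ∂ν, |F x| ≤ C) : Integrable F ν :=
  Integrable.mono' (integrable_const C) hF.aestronglyMeasurable
    (by simpa [Real.norm_eq_abs] using hC)

/-- bound for mlEval. -/
noncomputable def mlB {n : ℕ} (coeff : Finset (Fin n) → ℝ) (M : ℝ) : ℝ :=
  (∑ S : Finset (Fin n), |coeff S|) * M ^ n

lemma mlB_nonneg {n : ℕ} (coeff : Finset (Fin n) → ℝ) {M : ℝ} (hM : 1 ≤ M) :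
    0 ≤ mlB coeff M :=
  mul_nonneg (Finset.sum_nonneg fun _ _ => abs_nonneg _)
    (pow_nonneg (le_trans zero_le_one hM) _)

lemma integrable_mlEval_pow_mul {n : ℕ} (c₁ c₂ : Finset (Fin n) → ℝ) (a b : ℕ) {M : ℝ}
    (hM : 1 ≤ M) (hμM : ∀ᵐ t ∂μ, |t| ≤ M) :
    Integrable (fun x => mlEval c₁ x ^ a * mlEval c₂ x ^ b)
      (Measure.pi fun _ : Fin n => μ) := by
  refine integrable_of_ae_bound
    (((measurable_mlEval c₁).pow_const a).mul ((measurable_mlEval c₂).pow_const b))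
    (C := mlB c₁ M ^ a * mlB c₂ M ^ b) ?_
  filter_upwards [ae_pi_bound hμM n] with x hx
  rw [abs_mul, abs_pow, abs_pow]
  exact mul_le_mul (pow_le_pow_left₀ (abs_nonneg _) (mlEval_bound c₁ hM hx) a)
    (pow_le_pow_left₀ (abs_nonneg _) (mlEval_bound c₂ hM hx) b)
    (pow_nonneg (abs_nonneg _) _) (pow_nonneg (mlB_nonneg c₁ hM) _)

lemma integrable_mlEval_pow {n : ℕ} (c : Finset (Fin n) → ℝ) (a : ℕ) {M : ℝ}
    (hM : 1 ≤ M) (hμM : ∀ᵐ t ∂μ, |t| ≤ M) :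
    Integrable (fun x => mlEval c x ^ a) (Measure.pi fun _ : Fin n => μ) := by
  simpa using integrable_mlEval_pow_mul c c a 0 hM hμM

lemma integrable_pow_moment {M : ℝ} (hM : 1 ≤ M) (hμM : ∀ᵐ t ∂μ, |t| ≤ M) (k : ℕ) :
    Integrable (fun t : ℝ => t ^ k) μ := by
  refine integrable_of_ae_bound (measurable_id.pow_const k) (C := M ^ k) ?_
  filter_upwards [hμM] with t ht
  calc |t ^ k| = |t| ^ k := abs_pow t k
    _ ≤ M ^ k := pow_le_pow_left₀ (abs_nonneg _) ht k

lemma m4_le {M : ℝ} (hM : 1 ≤ M) (hμM : ∀ᵐ t ∂μ, |t| ≤ M)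
    (hvar : ∫ t, t ^ 2 ∂μ = 1) : ∫ t, t ^ 4 ∂μ ≤ M ^ 2 := by
  have h : ∫ t, t ^ 4 ∂μ ≤ ∫ t, M ^ 2 * t ^ 2 ∂μ := by
    refine integral_mono_ae (integrable_pow_moment hM hμM 4)
      ((integrable_pow_moment hM hμM 2).const_mul _) ?_
    filter_upwards [hμM] with t ht
    have h2 : t ^ 2 ≤ M ^ 2 := by
      have := sq_le_sq' (neg_le_of_abs_le ht) (le_of_abs_le ht)
      simpa [sq] using this
    nlinarith [sq_nonneg t, sq_nonneg (t^2)]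
  rwa [integral_const_mul, hvar, mul_one] at h

lemma m3_abs_le {M : ℝ} (hM : 1 ≤ M) (hμM : ∀ᵐ t ∂μ, |t| ≤ M)
    (hvar : ∫ t, t ^ 2 ∂μ = 1) : |∫ t, t ^ 3 ∂μ| ≤ M := by
  have h1 : |∫ t, t ^ 3 ∂μ| ≤ ∫ t, |t| ^ 3 ∂μ := by
    have h0 := norm_integral_le_integral_norm (μ := μ) (f := fun t : ℝ => t ^ 3)
    simp only [Real.norm_eq_abs, abs_pow] at h0
    exact h0
  have h2 : ∫ t, |t| ^ 3 ∂μ ≤ ∫ t, M * t ^ 2 ∂μ := by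
    have hi : Integrable (fun t : ℝ => |t| ^ 3) μ := by
      simpa [abs_pow] using (integrable_pow_moment hM hμM 3).abs
    refine integral_mono_ae hi ((integrable_pow_moment hM hμM 2).const_mul _) ?_
    filter_upwards [hμM] with t ht
    have habs : |t| ^ 3 = |t| * t ^ 2 := by
      rw [pow_succ, sq_abs, mul_comm]
    rw [habs]
    exact mul_le_mul_of_nonneg_right ht (sq_nonneg t)
  rw [integral_const_mul, hvar, mul_one] at h2
  exact h1.trans h2

lemma integral_snoc {n : ℕ} (F : (Fin (n + 1) → ℝ) → ℝ) (hF : Measurable F) (C : ℝ)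
    (hC : ∀ᵐ y ∂(Measure.pi fun _ : Fin (n + 1) => μ), |F y| ≤ C) :
    ∫ y, F y ∂(Measure.pi fun _ : Fin (n + 1) => μ)
      = ∫ t, ∫ x, F (Fin.snoc x t) ∂(Measure.pi fun _ : Fin n => μ) ∂μ := by
  have mp := measurePreserving_piFinSuccAbove (fun _ : Fin (n + 1) => μ) (Fin.last n)
  set e := MeasurableEquiv.piFinSuccAbove (fun _ : Fin (n + 1) => ℝ) (Fin.last n) with he
  have h1 : ∫ z, F (e.symm z) ∂(μ.prod (Measure.pi fun _ : Fin n => μ))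
      = ∫ y, F y ∂(Measure.pi fun _ : Fin (n + 1) => μ) := (mp.symm _).integral_comp' F
  rw [← h1]
  have hint : Integrable (fun z => F (e.symm z)) (μ.prod (Measure.pi fun _ : Fin n => μ)) := by
    refine integrable_of_ae_bound (hF.comp e.symm.measurable) (C := C) ?_
    rw [← mp.map_eq, ae_map_iff e.measurable.aemeasurable]
    · simpa using hC
    · exact measurableSet_le ((hF.comp e.symm.measurable).abs) measurable_const
  rw [integral_prod _ hint]
  congr 1
  ext t
  congr 1
  ext x
  congr 1
  show (Fin.insertNthEquiv (fun _ => ℝ) (Fin.last n)) (t, x) = Fin.snoc x t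
  simp [Fin.insertNthEquiv, Fin.insertNth_last']
end

section induction4
variable {μ : Measure ℝ} [IsProbabilityMeasure μ]

lemma mlEval_eq_zero {n : ℕ} {c : Finset (Fin n) → ℝ} (hc : ∀ S, c S = 0) (x : Fin n → ℝ) :
    mlEval c x = 0 := by simp [mlEval, hc]

lemma card_insert_last {n : ℕ} (T : Finset (Fin n)) :
    (insert (Fin.last n) (T.map Fin.castSuccEmb)).card = T.card + 1 := by
  rw [Finset.card_insert_of_notMem (last_not_mem_map T), Finset.card_map]

lemma aux_cube {M u v : ℝ} (hM0 : 0 < M) :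
    |u * v ^ 3| ≤ (u ^ 2 * v ^ 2 + M ^ 2 * v ^ 4) / (2 * M) := by
  have h1 : 2 * |u * v| * (M * v ^ 2) ≤ |u * v| ^ 2 + (M * v ^ 2) ^ 2 :=
    two_mul_le_add_sq _ _
  have h2 : |u * v ^ 3| = |u * v| * v ^ 2 := by
    rw [abs_mul, abs_mul, abs_pow, pow_succ, sq_abs]
    ring
  rw [le_div_iff₀ (by positivity), h2]
  have h3 : |u * v| ^ 2 = u ^ 2 * v ^ 2 := by
    rw [abs_mul, mul_pow, sq_abs, sq_abs]
  nlinarith [h1, h3, sq_nonneg v, abs_nonneg (u * v)]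

lemma aux_8c22 {Q K' a2 b2 c22 G4 H4 : ℝ} (hQ16 : 16 ≤ Q) (hK' : 0 ≤ K')
    (ha2 : 0 ≤ a2) (hb2 : 0 ≤ b2) (hc22 : 0 ≤ c22) (hH4 : 0 ≤ H4)
    (hCS : c22 ^ 2 ≤ G4 * H4) (hG : G4 ≤ Q * K' * a2 ^ 2) (hH : H4 ≤ K' * b2 ^ 2) :
    8 * c22 ≤ 2 * (Q * K') * (a2 * b2) := by
  have hQ0 : (0:ℝ) ≤ Q := by linarith
  have hGH4 : G4 * H4 ≤ (Q * K' * a2 ^ 2) * (K' * b2 ^ 2) :=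
    mul_le_mul hG hH hH4 (by positivity)
  have hsq : (8 * c22) ^ 2 ≤ (2 * (Q * K') * (a2 * b2)) ^ 2 := by
    nlinarith [hCS, hGH4, mul_nonneg (mul_nonneg (mul_nonneg (sub_nonneg.2 hQ16) hK') hK')
      (mul_nonneg (sq_nonneg a2) (sq_nonneg b2))]
  have h2nn : 0 ≤ 2 * (Q * K') * (a2 * b2) := by positivity
  exact le_of_pow_le_pow_left₀ two_ne_zero h2nn hsq

lemma aux_final {M Q K' a2 b2 c22 G4 H4 c13 m3 m4 X : ℝ} (hM0 : 0 < M)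
    (hQ : Q = 8 * M ^ 2) (hQ16 : 16 ≤ Q) (hK' : 0 ≤ K')
    (ha2 : 0 ≤ a2) (hb2 : 0 ≤ b2) (hc22 : 0 ≤ c22) (hH4 : 0 ≤ H4)
    (hCS : c22 ^ 2 ≤ G4 * H4) (hG : G4 ≤ Q * K' * a2 ^ 2) (hH : H4 ≤ K' * b2 ^ 2)
    (hc13 : |c13| ≤ (c22 + M ^ 2 * H4) / (2 * M)) (hm3 : |m3| ≤ M) (hm4 : m4 ≤ M ^ 2)
    (hX : X = G4 + 6 * c22 + 4 * c13 * m3 + H4 * m4) :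
    X ≤ (Q * K') * (a2 + b2) ^ 2 := by
  have h8 : 8 * c22 ≤ 2 * (Q * K') * (a2 * b2) :=
    aux_8c22 hQ16 hK' ha2 hb2 hc22 hH4 hCS hG hH
  have hcm : 4 * c13 * m3 ≤ 2 * c22 + 2 * M ^ 2 * H4 := by
    have h2 : c13 * m3 ≤ |c13| * M := by
      calc c13 * m3 ≤ |c13 * m3| := le_abs_self _
        _ = |c13| * |m3| := abs_mul _ _
        _ ≤ |c13| * M := mul_le_mul_of_nonneg_left hm3 (abs_nonneg _)
    have h3 : |c13| * M ≤ (c22 + M ^ 2 * H4) / 2 := by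
      have h4 := mul_le_mul_of_nonneg_right hc13 (le_of_lt hM0)
      have h5 : (c22 + M ^ 2 * H4) / (2 * M) * M = (c22 + M ^ 2 * H4) / 2 := by
        field_simp
      rw [h5] at h4
      exact h4
    linarith
  have hm4t : H4 * m4 ≤ M ^ 2 * H4 := by nlinarith [hm4, hH4]
  have h3M : 3 * M ^ 2 * H4 ≤ (3 / 8) * (Q * K') * b2 ^ 2 := by
    have := mul_le_mul_of_nonneg_left hH (by positivity : (0:ℝ) ≤ 3 * M ^ 2)
    calc 3 * M ^ 2 * H4 ≤ 3 * M ^ 2 * (K' * b2 ^ 2) := this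
      _ = (3 / 8) * (Q * K') * b2 ^ 2 := by rw [hQ]; ring
  have hQ0 : (0:ℝ) ≤ Q := by linarith
  rw [hX]
  nlinarith [hG, h8, hcm, hm4t, h3M, mul_nonneg (mul_nonneg hQ0 hK') (sq_nonneg b2)]

lemma fourth_moment {M : ℝ} (hM1 : 1 ≤ M) (hM2 : 2 ≤ M ^ 2) (hμM : ∀ᵐ t ∂μ, |t| ≤ M)
    (hmean : ∫ t, t ∂μ = 0) (hvar : ∫ t, t ^ 2 ∂μ = 1) :
    ∀ (n d : ℕ) (coeff : Finset (Fin n) → ℝ), (∀ S, d < S.card → coeff S = 0) →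
      ∫ x, mlEval coeff x ^ 4 ∂(Measure.pi fun _ : Fin n => μ)
        ≤ (8 * M ^ 2) ^ d * (∫ x, mlEval coeff x ^ 2 ∂(Measure.pi fun _ : Fin n => μ)) ^ 2 := by
  have hM0 : (0 : ℝ) < M := lt_of_lt_of_le zero_lt_one hM1
  have hQ16 : (16 : ℝ) ≤ 8 * M ^ 2 := by nlinarith
  have hQ0 : (0 : ℝ) ≤ 8 * M ^ 2 := by nlinarith
  intro n
  induction n with
  | zero =>
    intro d coeff _
    have huniv : (Finset.univ : Finset (Finset (Fin 0))) = {∅} := by decide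
    have hml : ∀ x : Fin 0 → ℝ, mlEval coeff x = coeff ∅ := by
      intro x
      unfold mlEval
      rw [huniv, Finset.sum_singleton, Finset.prod_empty, mul_one]
    simp only [hml]
    rw [integral_const, integral_const]
    simp only [measure_univ, probReal_univ, ENNReal.toReal_one, one_smul, smul_eq_mul]
    have h1 : (1 : ℝ) ≤ (8 * M ^ 2) ^ d := one_le_pow₀ (by linarith)
    nlinarith [pow_nonneg (sq_nonneg (coeff ∅)) 2, sq_nonneg (coeff ∅ ^ 2)]
  | succ n ih =>
    intro d coeff hdeg
    have it1 : Integrable (fun t : ℝ => t) μ := by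
      simpa using integrable_pow_moment hM1 hμM 1
    have it2 := integrable_pow_moment hM1 hμM 2
    have it3 := integrable_pow_moment hM1 hμM 3
    have it4 := integrable_pow_moment hM1 hμM 4
    set g : Finset (Fin n) → ℝ := fun T => coeff (T.map Fin.castSuccEmb) with hgdef
    set h : Finset (Fin n) → ℝ :=
      fun T => coeff (insert (Fin.last n) (T.map Fin.castSuccEmb)) with hhdef
    have hdg : ∀ T : Finset (Fin n), d < T.card → g T = 0 := fun T hT =>
      hdeg _ (by rwa [Finset.card_map])
    have iG2 : Integrable (fun x => mlEval g x ^ 2) (Measure.pi fun _ : Fin n => μ) :=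
      integrable_mlEval_pow g 2 hM1 hμM
    have iH2 : Integrable (fun x => mlEval h x ^ 2) (Measure.pi fun _ : Fin n => μ) :=
      integrable_mlEval_pow h 2 hM1 hμM
    have iG4 : Integrable (fun x => mlEval g x ^ 4) (Measure.pi fun _ : Fin n => μ) :=
      integrable_mlEval_pow g 4 hM1 hμM
    have iH4 : Integrable (fun x => mlEval h x ^ 4) (Measure.pi fun _ : Fin n => μ) :=
      integrable_mlEval_pow h 4 hM1 hμM
    have iGH : Integrable (fun x => mlEval g x * mlEval h x) (Measure.pi fun _ : Fin n => μ) := by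
      simpa using integrable_mlEval_pow_mul g h 1 1 hM1 hμM
    have iG3H : Integrable (fun x => mlEval g x ^ 3 * mlEval h x)
        (Measure.pi fun _ : Fin n => μ) := by
      simpa using integrable_mlEval_pow_mul g h 3 1 hM1 hμM
    have iG2H2 : Integrable (fun x => mlEval g x ^ 2 * mlEval h x ^ 2)
        (Measure.pi fun _ : Fin n => μ) := integrable_mlEval_pow_mul g h 2 2 hM1 hμM
    have iGH3 : Integrable (fun x => mlEval g x * mlEval h x ^ 3)
        (Measure.pi fun _ : Fin n => μ) := by
      simpa using integrable_mlEval_pow_mul g h 1 3 hM1 hμM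
    have iGH3' : Integrable (fun x => |mlEval g x * mlEval h x ^ 3|)
        (Measure.pi fun _ : Fin n => μ) := iGH3.abs
    -- abbreviations
    set ν := (Measure.pi fun _ : Fin n => μ) with hνdef
    set a2 := ∫ x, mlEval g x ^ 2 ∂ν with ha2
    set b2 := ∫ x, mlEval h x ^ 2 ∂ν with hb2
    set c11 := ∫ x, mlEval g x * mlEval h x ∂ν with hc11
    set G4 := ∫ x, mlEval g x ^ 4 ∂ν with hG4
    set H4 := ∫ x, mlEval h x ^ 4 ∂ν with hH4
    set c31 := ∫ x, mlEval g x ^ 3 * mlEval h x ∂ν with hc31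
    set c22 := ∫ x, mlEval g x ^ 2 * mlEval h x ^ 2 ∂ν with hc22
    set c13 := ∫ x, mlEval g x * mlEval h x ^ 3 ∂ν with hc13
    -- inner expansions
    have inner2 : ∀ t : ℝ, ∫ x, mlEval coeff (Fin.snoc x t) ^ 2 ∂ν
        = a2 + (2 * c11) * t + b2 * t ^ 2 := by
      intro t
      have hexp : ∀ x : Fin n → ℝ, mlEval coeff (Fin.snoc x t) ^ 2
          = mlEval g x ^ 2 + (2 * t) * (mlEval g x * mlEval h x)
            + t ^ 2 * mlEval h x ^ 2 := by
        intro x; rw [mlEval_snoc]; ring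
      simp only [hexp]
      have j1 : Integrable (fun x => mlEval g x ^ 2 + 2 * t * (mlEval g x * mlEval h x)) ν :=
        iG2.add (iGH.const_mul _)
      have j2 : Integrable (fun x => t ^ 2 * mlEval h x ^ 2) ν := iH2.const_mul _
      have j3 : Integrable (fun x => 2 * t * (mlEval g x * mlEval h x)) ν := iGH.const_mul _
      rw [integral_add j1 j2, integral_add iG2 j3, integral_const_mul, integral_const_mul]
      ring
    have inner4 : ∀ t : ℝ, ∫ x, mlEval coeff (Fin.snoc x t) ^ 4 ∂ν
        = G4 + (4 * c31) * t + (6 * c22) * t ^ 2 + (4 * c13) * t ^ 3 + H4 * t ^ 4 := by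
      intro t
      have hexp : ∀ x : Fin n → ℝ, mlEval coeff (Fin.snoc x t) ^ 4
          = mlEval g x ^ 4 + (4 * t) * (mlEval g x ^ 3 * mlEval h x)
            + (6 * t ^ 2) * (mlEval g x ^ 2 * mlEval h x ^ 2)
            + (4 * t ^ 3) * (mlEval g x * mlEval h x ^ 3)
            + t ^ 4 * mlEval h x ^ 4 := by
        intro x; rw [mlEval_snoc]; ring
      simp only [hexp]
      have k1 : Integrable (fun x => 4 * t * (mlEval g x ^ 3 * mlEval h x)) ν := iG3H.const_mul _
      have k2 : Integrable (fun x => 6 * t ^ 2 * (mlEval g x ^ 2 * mlEval h x ^ 2)) ν :=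
        iG2H2.const_mul _
      have k3 : Integrable (fun x => 4 * t ^ 3 * (mlEval g x * mlEval h x ^ 3)) ν :=
        iGH3.const_mul _
      have k4 : Integrable (fun x => t ^ 4 * mlEval h x ^ 4) ν := iH4.const_mul _
      have k12 : Integrable (fun x => mlEval g x ^ 4 + 4 * t * (mlEval g x ^ 3 * mlEval h x)) ν :=
        iG4.add k1
      have k123 : Integrable (fun x => mlEval g x ^ 4 + 4 * t * (mlEval g x ^ 3 * mlEval h x)
          + 6 * t ^ 2 * (mlEval g x ^ 2 * mlEval h x ^ 2)) ν := k12.add k2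
      have k1234 : Integrable (fun x => mlEval g x ^ 4 + 4 * t * (mlEval g x ^ 3 * mlEval h x)
          + 6 * t ^ 2 * (mlEval g x ^ 2 * mlEval h x ^ 2)
          + 4 * t ^ 3 * (mlEval g x * mlEval h x ^ 3)) ν := k123.add k3
      rw [integral_add k1234 k4, integral_add k123 k3, integral_add k12 k2,
        integral_add iG4 k1,
        integral_const_mul, integral_const_mul, integral_const_mul, integral_const_mul]
      ring
    -- outer integrals
    have hF2meas : Measurable (fun y : Fin (n + 1) → ℝ => mlEval coeff y ^ 2) :=
      (measurable_mlEval coeff).pow_const 2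
    have hF4meas : Measurable (fun y : Fin (n + 1) → ℝ => mlEval coeff y ^ 4) :=
      (measurable_mlEval coeff).pow_const 4
    have hF2ae : ∀ᵐ y ∂(Measure.pi fun _ : Fin (n + 1) => μ),
        |mlEval coeff y ^ 2| ≤ mlB coeff M ^ 2 := by
      filter_upwards [ae_pi_bound hμM (n + 1)] with y hy
      rw [abs_pow]
      exact pow_le_pow_left₀ (abs_nonneg _) (mlEval_bound coeff hM1 hy) 2
    have hF4ae : ∀ᵐ y ∂(Measure.pi fun _ : Fin (n + 1) => μ),
        |mlEval coeff y ^ 4| ≤ mlB coeff M ^ 4 := by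
      filter_upwards [ae_pi_bound hμM (n + 1)] with y hy
      rw [abs_pow]
      exact pow_le_pow_left₀ (abs_nonneg _) (mlEval_bound coeff hM1 hy) 4
    have e2 : ∫ y, mlEval coeff y ^ 2 ∂(Measure.pi fun _ : Fin (n + 1) => μ) = a2 + b2 := by
      rw [integral_snoc _ hF2meas _ hF2ae]
      simp only [← hνdef, inner2]
      have l1 : Integrable (fun t : ℝ => 2 * c11 * t) μ := it1.const_mul _
      have l2 : Integrable (fun t : ℝ => b2 * t ^ 2) μ := it2.const_mul _
      have l12 : Integrable (fun t : ℝ => a2 + 2 * c11 * t) μ := (integrable_const a2).add l1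
      rw [integral_add l12 l2, integral_add (integrable_const a2) l1,
        integral_const_mul, integral_const_mul, hmean, hvar, integral_const]
      simp [measure_univ]
    have e4 : ∫ y, mlEval coeff y ^ 4 ∂(Measure.pi fun _ : Fin (n + 1) => μ)
        = G4 + 6 * c22 + (4 * c13) * (∫ t, t ^ 3 ∂μ) + H4 * (∫ t, t ^ 4 ∂μ) := by
      rw [integral_snoc _ hF4meas _ hF4ae]
      simp only [← hνdef, inner4]
      have p1 : Integrable (fun t : ℝ => 4 * c31 * t) μ := it1.const_mul _
      have p2 : Integrable (fun t : ℝ => 6 * c22 * t ^ 2) μ := it2.const_mul _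
      have p3 : Integrable (fun t : ℝ => 4 * c13 * t ^ 3) μ := it3.const_mul _
      have p4 : Integrable (fun t : ℝ => H4 * t ^ 4) μ := it4.const_mul _
      have p12 : Integrable (fun t : ℝ => G4 + 4 * c31 * t) μ := (integrable_const G4).add p1
      have p123 : Integrable (fun t : ℝ => G4 + 4 * c31 * t + 6 * c22 * t ^ 2) μ := p12.add p2
      have p1234 : Integrable
          (fun t : ℝ => G4 + 4 * c31 * t + 6 * c22 * t ^ 2 + 4 * c13 * t ^ 3) μ := p123.add p3
      rw [integral_add p1234 p4, integral_add p123 p3, integral_add p12 p2,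
        integral_add (integrable_const G4) p1,
        integral_const_mul, integral_const_mul, integral_const_mul, integral_const_mul,
        hmean, hvar, integral_const]
      simp only [measure_univ, probReal_univ, ENNReal.toReal_one, one_smul, smul_eq_mul]
      ring
    -- nonnegativity
    have hG4nn : 0 ≤ G4 := integral_nonneg fun x => by positivity
    have hH4nn : 0 ≤ H4 := integral_nonneg fun x => by positivity
    have hc22nn : 0 ≤ c22 := integral_nonneg fun x => by positivity
    have ha2nn : 0 ≤ a2 := integral_nonneg fun x => by positivity
    have hb2nn : 0 ≤ b2 := integral_nonneg fun x => by positivity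
    -- Cauchy-Schwarz : c22 ^ 2 ≤ G4 * H4
    have hCS : c22 ^ 2 ≤ G4 * H4 := by
      have key : ∀ u : ℝ, 0 ≤ G4 * (u * u) + (-2 * c22) * u + H4 := by
        intro u
        have hexp : ∀ x : Fin n → ℝ, (u * mlEval g x ^ 2 - mlEval h x ^ 2) ^ 2
            = (u * u) * mlEval g x ^ 4 + (-2 * u) * (mlEval g x ^ 2 * mlEval h x ^ 2)
              + mlEval h x ^ 4 := by intro x; ring
        have hnn : 0 ≤ ∫ x, (u * mlEval g x ^ 2 - mlEval h x ^ 2) ^ 2 ∂ν :=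
          integral_nonneg fun x => sq_nonneg _
        rw [show (fun x => (u * mlEval g x ^ 2 - mlEval h x ^ 2) ^ 2) = fun x =>
            (u * u) * mlEval g x ^ 4 + (-2 * u) * (mlEval g x ^ 2 * mlEval h x ^ 2)
              + mlEval h x ^ 4 from funext hexp] at hnn
        have q1 : Integrable (fun x => (u * u) * mlEval g x ^ 4) ν := iG4.const_mul _
        have q2 : Integrable (fun x => (-2 * u) * (mlEval g x ^ 2 * mlEval h x ^ 2)) ν :=
          iG2H2.const_mul _
        have q12 : Integrable (fun x => (u * u) * mlEval g x ^ 4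
            + (-2 * u) * (mlEval g x ^ 2 * mlEval h x ^ 2)) ν := q1.add q2
        rw [integral_add q12 iH4, integral_add q1 q2,
          integral_const_mul, integral_const_mul, ← hG4, ← hc22, ← hH4] at hnn
        linarith [hnn]
      have hd := discrim_le_zero key
      have hd' : (-2 * c22) ^ 2 - 4 * G4 * H4 ≤ 0 := by rwa [discrim] at hd
      nlinarith [hd']
    -- moment bounds
    have hm4 := m4_le hM1 hμM hvar
    have hm3 := m3_abs_le hM1 hμM hvar
    -- pointwise bound for c13
    have hc13abs : |c13| ≤ (c22 + M ^ 2 * H4) / (2 * M) := by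
      have hpt : ∀ x : Fin n → ℝ, |mlEval g x * mlEval h x ^ 3|
          ≤ (mlEval g x ^ 2 * mlEval h x ^ 2 + M ^ 2 * mlEval h x ^ 4) / (2 * M) :=
        fun x => aux_cube hM0
      have habs : |c13| ≤ ∫ x, |mlEval g x * mlEval h x ^ 3| ∂ν := by
        have h0 := norm_integral_le_integral_norm (μ := ν)
          (f := fun x => mlEval g x * mlEval h x ^ 3)
        simpa [Real.norm_eq_abs, abs_mul, abs_pow, hc13] using h0
      refine habs.trans ?_
      have : ∫ x, |mlEval g x * mlEval h x ^ 3| ∂ν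
          ≤ ∫ x, (mlEval g x ^ 2 * mlEval h x ^ 2 + M ^ 2 * mlEval h x ^ 4) / (2 * M) ∂ν :=
        integral_mono iGH3' ((iG2H2.add (iH4.const_mul _)).div_const _) fun x => hpt x
      refine this.trans ?_
      rw [integral_div, integral_add iG2H2 (iH4.const_mul _), integral_const_mul]
    -- degree cases
    cases d with
    | zero =>
      have hhz : ∀ T : Finset (Fin n), h T = 0 := fun T =>
        hdeg _ (by rw [card_insert_last]; omega)
      have hHz : ∀ x : Fin n → ℝ, mlEval h x = 0 := mlEval_eq_zero hhz
      have hb2z : b2 = 0 := by rw [hb2]; simp [hHz]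
      have hc22z : c22 = 0 := by rw [hc22]; simp [hHz]
      have hc13z : c13 = 0 := by rw [hc13]; simp [hHz]
      have hH4z : H4 = 0 := by rw [hH4]; simp [hHz]
      have hihg := ih 0 g hdg
      rw [← ha2, ← hG4] at hihg
      rw [e2, e4, hb2z, hc22z, hc13z, hH4z]
      simpa using hihg
    | succ d' =>
      have hdh : ∀ T : Finset (Fin n), d' < T.card → h T = 0 := fun T hT =>
        hdeg _ (by rw [card_insert_last]; omega)
      have hihg := ih (d' + 1) g hdg
      have hihh := ih d' h hdh
      rw [← ha2, ← hG4] at hihg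
      rw [← hb2, ← hH4] at hihh
      rw [e2, e4]
      have hQpow : (8 * M ^ 2) ^ (d' + 1) = (8 * M ^ 2) * (8 * M ^ 2) ^ d' := by ring
      rw [hQpow] at hihg ⊢
      exact aux_final hM0 rfl hQ16 (pow_nonneg hQ0 d') ha2nn hb2nn hc22nn hH4nn hCS
        (by linarith [hihg]) hihh hc13abs hm3 hm4 rfl
end induction4

theorem stmt11 {n d : ℕ} (hd : 1 ≤ d) (μ : Measure ℝ) [IsProbabilityMeasure μ]
    (supp : Finset ℝ) (hsupp : μ ↑supp = 1)
    (hmean : ∫ x, x ∂μ = 0) (hvar : ∫ x, x ^ 2 ∂μ = 1)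
    (lam : ℝ) (hlam : 0 < lam) (hlam2 : lam ≤ 1 / 2)
    (hmin : ∀ v ∈ supp, μ {v} ≠ 0 → lam ≤ (μ {v}).toReal)
    (coeff : Finset (Fin n) → ℝ)
    (hdeg : ∀ S : Finset (Fin n), d < S.card → coeff S = 0)
    (hL2 : ∫ x, (mlEval coeff x) ^ 2 ∂(Measure.pi fun _ : Fin n => μ) = 1) :
    ∫ x, (if (2 * Real.exp 1 / lam) ^ d < |mlEval coeff x| then (mlEval coeff x) ^ 2 else 0)
        ∂(Measure.pi fun _ : Fin n => μ) ≤ 0.52 := by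
  classical
  set M := Real.sqrt lam⁻¹ with hMdef
  have hlaminv2 : (2 : ℝ) ≤ lam⁻¹ := by
    rw [le_inv_comm₀ (by norm_num) hlam]
    linarith
  have hM2 : M ^ 2 = lam⁻¹ := Real.sq_sqrt (by positivity)
  have hM1 : 1 ≤ M := by
    rw [hMdef, show (1 : ℝ) = Real.sqrt 1 by simp]
    exact Real.sqrt_le_sqrt (by linarith)
  have hM0 : (0 : ℝ) < M := lt_of_lt_of_le zero_lt_one hM1
  have hM2' : 2 ≤ M ^ 2 := by rw [hM2]; exact hlaminv2
  -- a.e. membership in supp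
  have hsuppmeas : MeasurableSet (↑supp : Set ℝ) := supp.finite_toSet.measurableSet
  have hcompl : μ (↑supp)ᶜ = 0 := by
    rw [measure_compl hsuppmeas (measure_ne_top μ _), measure_univ, hsupp, tsub_self]
  have haes : ∀ᵐ t ∂μ, t ∈ (↑supp : Set ℝ) := by
    rw [ae_iff]
    exact hcompl
  -- crude integrability
  have hne : supp.Nonempty := by
    rcases Finset.eq_empty_or_nonempty supp with h | h
    · exfalso
      rw [h] at hsupp
      simp at hsupp
    · exact h
  set C0 := max (supp.sup' hne fun v => |v|) 1 with hC0
  have hC01 : (1 : ℝ) ≤ C0 := le_max_right _ _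
  have haeC0 : ∀ᵐ t ∂μ, |t| ≤ C0 := by
    filter_upwards [haes] with t ht
    exact le_trans (Finset.le_sup' (fun v => |v|) ht) (le_max_left _ _)
  have hx2int : Integrable (fun t : ℝ => t ^ 2) μ := integrable_pow_moment hC01 haeC0 2
  -- pointwise bound on support atoms
  have hvM : ∀ v ∈ supp, μ {v} ≠ 0 → |v| ≤ M := by
    intro v hv hvne
    have hlamv := hmin v hv hvne
    have hset : ∫ t in {v}, t ^ 2 ∂μ ≤ ∫ t, t ^ 2 ∂μ :=
      setIntegral_le_integral hx2int (Filter.Eventually.of_forall fun t => sq_nonneg t)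
    rw [integral_singleton (fun t : ℝ => t ^ 2) v, hvar, smul_eq_mul] at hset
    have h2 : v ^ 2 ≤ M ^ 2 := by
      rw [hM2, ← one_div, le_div_iff₀ hlam]
      have h3 : v ^ 2 * lam ≤ v ^ 2 * (μ {v}).toReal :=
        mul_le_mul_of_nonneg_left hlamv (sq_nonneg v)
      rw [measureReal_def] at hset
      nlinarith [hset, h3]
    calc |v| = Real.sqrt (v ^ 2) := (Real.sqrt_sq_eq_abs v).symm
      _ ≤ Real.sqrt (M ^ 2) := Real.sqrt_le_sqrt h2
      _ = M := Real.sqrt_sq hM0.le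
  -- a.e. bound by M
  have hzero : μ {t : ℝ | t ∈ supp ∧ μ {t} = 0} = 0 := by
    have hcnt : ({t : ℝ | t ∈ supp ∧ μ {t} = 0}).Countable :=
      (supp.finite_toSet.subset (fun t ht => ht.1)).countable
    have : {t : ℝ | t ∈ supp ∧ μ {t} = 0}
        = ⋃ t ∈ {t : ℝ | t ∈ supp ∧ μ {t} = 0}, {t} := (Set.biUnion_of_singleton _).symm
    rw [this, measure_biUnion_null_iff hcnt]
    exact fun t ht => ht.2
  have hμM : ∀ᵐ t ∂μ, |t| ≤ M := by
    rw [ae_iff]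
    refine measure_mono_null (fun t ht => ?_)
      (measure_union_null hcompl hzero)
    by_cases hts : t ∈ supp
    · right
      refine ⟨hts, ?_⟩
      by_contra hne0
      exact ht (hvM t hts hne0)
    · left
      exact hts
  -- fourth moment bound
  have hf4 := fourth_moment hM1 hM2' hμM hmean hvar n d coeff hdeg
  rw [hL2] at hf4
  rw [hM2] at hf4
  simp only [one_pow, mul_one] at hf4
  -- final comparison
  set t0 := (2 * Real.exp 1 / lam) ^ d with ht0def
  have hepos : (0 : ℝ) < Real.exp 1 := Real.exp_pos 1
  have ht0pos : 0 < t0 := pow_pos (by positivity) d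
  have intf4 : Integrable (fun x => mlEval coeff x ^ 4) (Measure.pi fun _ : Fin n => μ) :=
    integrable_mlEval_pow coeff 4 hM1 hμM
  have hptw : ∀ x : Fin n → ℝ,
      (if t0 < |mlEval coeff x| then mlEval coeff x ^ 2 else 0)
        ≤ mlEval coeff x ^ 4 / t0 ^ 2 := by
    intro x
    split_ifs with hx
    · rw [le_div_iff₀ (by positivity)]
      have h1 : t0 ^ 2 ≤ mlEval coeff x ^ 2 := by
        have := pow_le_pow_left₀ ht0pos.le hx.le 2
        rwa [sq_abs] at this
      nlinarith [h1, sq_nonneg (mlEval coeff x)]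
    · positivity
  have hmeas_if : Measurable fun x : Fin n → ℝ =>
      (if t0 < |mlEval coeff x| then mlEval coeff x ^ 2 else 0) :=
    Measurable.ite (measurableSet_lt measurable_const (measurable_mlEval coeff).abs)
      ((measurable_mlEval coeff).pow_const 2) measurable_const
  have hint_if : Integrable (fun x : Fin n → ℝ =>
      (if t0 < |mlEval coeff x| then mlEval coeff x ^ 2 else 0))
      (Measure.pi fun _ : Fin n => μ) := by
    refine integrable_of_ae_bound hmeas_if (C := mlB coeff M ^ 2) ?_
    filter_upwards [ae_pi_bound hμM n] with x hx
    split_ifs with hcase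
    · rw [abs_pow]
      exact pow_le_pow_left₀ (abs_nonneg _) (mlEval_bound coeff hM1 hx) 2
    · simpa using pow_nonneg (mlB_nonneg coeff hM1) 2
  have hstep : ∫ x, (if t0 < |mlEval coeff x| then mlEval coeff x ^ 2 else 0)
        ∂(Measure.pi fun _ : Fin n => μ)
      ≤ (8 * lam⁻¹) ^ d / t0 ^ 2 := by
    calc ∫ x, (if t0 < |mlEval coeff x| then mlEval coeff x ^ 2 else 0)
          ∂(Measure.pi fun _ : Fin n => μ)
        ≤ ∫ x, mlEval coeff x ^ 4 / t0 ^ 2 ∂(Measure.pi fun _ : Fin n => μ) :=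
          integral_mono hint_if (intf4.div_const _) hptw
      _ = (∫ x, mlEval coeff x ^ 4 ∂(Measure.pi fun _ : Fin n => μ)) / t0 ^ 2 := integral_div _ _
      _ ≤ (8 * lam⁻¹) ^ d / t0 ^ 2 := by gcongr
  refine hstep.trans ?_
  -- numerics
  have hratio : (8 * lam⁻¹) ^ d / t0 ^ 2 = (2 * lam / Real.exp 1 ^ 2) ^ d := by
    have hlne : lam ≠ 0 := hlam.ne'
    have hene : Real.exp 1 ≠ 0 := (Real.exp_pos 1).ne'
    rw [ht0def, ← pow_mul, show d * 2 = 2 * d from by ring, pow_mul, ← div_pow]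
    congr 1
    field_simp
    ring
  rw [hratio]
  have he2 : (2.7 : ℝ) < Real.exp 1 := by
    have := Real.exp_one_gt_d9
    norm_num at this ⊢
    linarith
  have hbase0 : 0 ≤ 2 * lam / Real.exp 1 ^ 2 := by positivity
  have hbase : 2 * lam / Real.exp 1 ^ 2 ≤ 0.52 := by
    rw [div_le_iff₀ (by positivity)]
    nlinarith [he2, hlam2]
  calc (2 * lam / Real.exp 1 ^ 2) ^ d ≤ 2 * lam / Real.exp 1 ^ 2 :=
      pow_le_of_le_one hbase0 (by nlinarith [he2, hlam2]) (by omega)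
    _ ≤ 0.52 := hbase
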